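/- Let α, β > -1 and w(x) = (1-x)^α(1+x)^β on [-1,1]. For y ∈ [0,1] and 0 < r ≤ π, define the ball B_y(r) = {x ∈ [-1,1] : |arccos x - arccos y| ≤ r} and μ(B_y(r)) = ∫_{B_y(r)} w(x) dx. Then μ(B_y(r)) is comparable to r·(d(y,1)+r)^{2α+1}, i.e., there exist constants c₁, c₂ > 0 depending only on α, β such that c₁·r·(arccos y + r)^{2α+1} ≤ μ(B_y(r)) ≤ c₂·r·(arccos y + r)^{2α+1}. -/
import Mathlib
set_option maxHeartbeats 2000000


open Real MeasureTheory


lemma rpow_bnd {A x B : ℝ} (q : ℝ) (hA : 0 < A) (h1 : A ≤ x) (h2 : x ≤ B) :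
    min (A ^ q) (B ^ q) ≤ x ^ q ∧ x ^ q ≤ max (A ^ q) (B ^ q) := by
  rcases le_or_gt 0 q with hq | hq
  · exact ⟨(min_le_left _ _).trans (Real.rpow_le_rpow hA.le h1 hq),
      (Real.rpow_le_rpow (hA.trans_le h1).le h2 hq).trans (le_max_right _ _)⟩
  · exact ⟨(min_le_right _ _).trans (Real.rpow_le_rpow_of_nonpos (hA.trans_le h1) h2 hq.le),
      (Real.rpow_le_rpow_of_nonpos hA h1 hq.le).trans (le_max_left _ _)⟩

lemma one_sub_pow_bnd {p : ℝ} (hp : 0 < p) {s : ℝ} (hs0 : 0 ≤ s) (hs1 : s ≤ 1) :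
    min 1 p * (1 - s) ≤ 1 - s ^ p ∧ 1 - s ^ p ≤ max 1 p * (1 - s) := by
  rcases le_or_gt 1 p with h1p | h1p
  · have hber := one_add_mul_self_le_rpow_one_add (s := s - 1) (by linarith) h1p
    rw [show (1:ℝ) + (s - 1) = s by ring] at hber
    have hsp : s ^ p ≤ s := by
      rcases eq_or_lt_of_le hs0 with h | h
      · rw [← h, Real.zero_rpow hp.ne']
      · calc s ^ p ≤ s ^ (1:ℝ) := Real.rpow_le_rpow_of_exponent_ge h hs1 h1p
          _ = s := Real.rpow_one s
    rw [min_eq_left h1p, max_eq_right h1p]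
    constructor <;> nlinarith
  · have hber := rpow_one_add_le_one_add_mul_self (s := s - 1) (by linarith) hp.le h1p.le
    rw [show (1:ℝ) + (s - 1) = s by ring] at hber
    have hsp : s ≤ s ^ p := by
      rcases eq_or_lt_of_le hs0 with h | h
      · rw [← h, Real.zero_rpow hp.ne']
      · calc s = s ^ (1:ℝ) := (Real.rpow_one s).symm
          _ ≤ s ^ p := Real.rpow_le_rpow_of_exponent_ge h hs1 h1p.le
    rw [min_eq_right h1p.le, max_eq_left h1p.le]
    constructor <;> nlinarith

lemma pow_diff_bnd {p : ℝ} (hp : 0 < p) {u v : ℝ} (hu : 0 ≤ u) (huv : u ≤ v) :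
    min 1 p * ((v - u) * v ^ (p - 1)) ≤ v ^ p - u ^ p ∧
    v ^ p - u ^ p ≤ max 1 p * ((v - u) * v ^ (p - 1)) := by
  rcases eq_or_lt_of_le (hu.trans huv) with hv | hv
  · have hu0 : u = 0 := le_antisymm (huv.trans_eq hv.symm) hu
    rw [← hv, hu0]
    norm_num [Real.zero_rpow hp.ne']
  · set s : ℝ := u / v with hsdef
    have hs0 : 0 ≤ s := div_nonneg hu hv.le
    have hs1 : s ≤ 1 := (div_le_one hv).2 huv
    have husv : u = s * v := (div_mul_cancel₀ u hv.ne').symm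
    have hup : u ^ p = s ^ p * v ^ p := by rw [husv, Real.mul_rpow hs0 hv.le]
    have hvv : (v - u) * v ^ (p - 1) = (1 - s) * v ^ p := by
      have h2 : v * v ^ (p - 1) = v ^ p := by
        have h3 := (Real.rpow_add hv 1 (p - 1)).symm
        rw [Real.rpow_one, show (1:ℝ) + (p - 1) = p by ring] at h3
        exact h3
      rw [husv, ← h2]; ring
    have hkey := one_sub_pow_bnd hp hs0 hs1
    have hvp : 0 ≤ v ^ p := Real.rpow_nonneg hv.le p
    constructor
    · rw [hvv, hup]
      calc min 1 p * ((1 - s) * v ^ p) = (min 1 p * (1 - s)) * v ^ p := by ring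
        _ ≤ (1 - s ^ p) * v ^ p := mul_le_mul_of_nonneg_right hkey.1 hvp
        _ = v ^ p - s ^ p * v ^ p := by ring
    · rw [hvv, hup]
      calc v ^ p - s ^ p * v ^ p = (1 - s ^ p) * v ^ p := by ring
        _ ≤ (max 1 p * (1 - s)) * v ^ p := mul_le_mul_of_nonneg_right hkey.2 hvp
        _ = max 1 p * ((1 - s) * v ^ p) := by ring

lemma sin_lb {θ : ℝ} (h0 : 0 ≤ θ) (h1 : θ ≤ 3 * π / 4) : θ / 5 ≤ Real.sin θ := by
  have hπ := Real.pi_pos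
  rcases le_or_gt θ (π / 2) with h | h
  · have hj := Real.mul_le_sin h0 h
    have h4 : π ≤ 4 := Real.pi_le_four
    have h5 : (1:ℝ)/2 ≤ 2 / π := by
      rw [div_le_div_iff₀ (by norm_num) hπ]; linarith
    nlinarith [mul_le_mul_of_nonneg_right h5 h0]
  · have h315 : π < 3.15 := Real.pi_lt_d2
    have hj := Real.mul_le_sin (x := π - θ) (by linarith) (by linarith)
    rw [Real.sin_pi_sub] at hj
    have h2 : (1:ℝ)/2 ≤ 2 / π * (π - θ) := by
      have ha : 2 / π * (π/4) ≤ 2 / π * (π - θ) :=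
        mul_le_mul_of_nonneg_left (by linarith) (by positivity)
      have hb : 2 / π * (π/4) = 1/2 := by field_simp; ring
      linarith
    nlinarith


lemma core_bnd (α : ℝ) (hα : α > -1) : ∃ c > (0:ℝ), ∃ C > (0:ℝ), ∀ a b : ℝ,
    0 ≤ a → a ≤ b → 0 < b → b ≤ 3 * π / 4 →
    c * ((b - a) * b ^ (2*α+1)) ≤ (1 - Real.cos b) ^ (α+1) - (1 - Real.cos a) ^ (α+1) ∧
    (1 - Real.cos b) ^ (α+1) - (1 - Real.cos a) ^ (α+1) ≤ C * ((b - a) * b ^ (2*α+1)) := by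
  have hπ := Real.pi_pos
  set p : ℝ := α + 1 with hpdef
  have hp : 0 < p := by simp only [hpdef]; linarith
  set m2 : ℝ := min ((2/π^2) ^ α) ((1/2 : ℝ) ^ α) with hm2def
  set M2 : ℝ := max ((2/π^2) ^ α) ((1/2 : ℝ) ^ α) with hM2def
  have hm2 : 0 < m2 := lt_min (Real.rpow_pos_of_pos (by positivity) _)
    (Real.rpow_pos_of_pos (by norm_num) _)
  have hM2 : 0 < M2 := lt_of_lt_of_le hm2 (min_le_max)
  have hmin1p : 0 < min 1 p := lt_min one_pos hp
  have hmax1p : 0 < max 1 p := lt_of_lt_of_le one_pos (le_max_left _ _)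
  refine ⟨min 1 p * (m2 / 50), by positivity, max 1 p * M2, by positivity, ?_⟩
  intro a b ha hab hb hb34
  set u : ℝ := 1 - Real.cos a with hudef
  set v : ℝ := 1 - Real.cos b with hvdef
  have hu : 0 ≤ u := by have := Real.cos_le_one a; simp only [hudef]; linarith
  have hcc : Real.cos b ≤ Real.cos a :=
    Real.cos_le_cos_of_nonneg_of_le_pi ha (by linarith) hab
  have huv : u ≤ v := by simp only [hudef, hvdef]; linarith
  have hvb : 2/π^2 * b^2 ≤ v := by
    have := Real.cos_le_one_sub_mul_cos_sq (x := b) (by rw [abs_of_nonneg hb.le]; linarith)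
    simp only [hvdef]; linarith
  have hvb2 : v ≤ 1/2 * b^2 := by
    have := Real.one_sub_sq_div_two_le_cos (x := b)
    simp only [hvdef]; linarith
  have hb2 : ((b^2 : ℝ)) ^ α = b ^ (2*α) := by
    rw [← Real.rpow_natCast b 2, ← Real.rpow_mul hb.le]; norm_num
  -- bounds on v ^ α
  have hva := rpow_bnd α (A := 2/π^2 * b^2) (B := 1/2 * b^2) (by positivity) hvb hvb2
  have hAeq : (2/π^2 * b^2 : ℝ) ^ α = (2/π^2)^α * b ^ (2*α) := by
    rw [Real.mul_rpow (by positivity) (by positivity), hb2]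
  have hBeq : (1/2 * b^2 : ℝ) ^ α = (1/2:ℝ)^α * b ^ (2*α) := by
    rw [Real.mul_rpow (by norm_num) (by positivity), hb2]
  have hb2α : 0 ≤ b ^ (2*α) := Real.rpow_nonneg hb.le _
  have hval : m2 * b ^ (2*α) ≤ v ^ α := by
    refine le_trans ?_ hva.1
    rw [hAeq, hBeq]
    exact le_min (mul_le_mul_of_nonneg_right (min_le_left _ _) hb2α)
      (mul_le_mul_of_nonneg_right (min_le_right _ _) hb2α)
  have hvau : v ^ α ≤ M2 * b ^ (2*α) := by
    refine le_trans hva.2 ?_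
    rw [hAeq, hBeq]
    exact max_le (mul_le_mul_of_nonneg_right (le_max_left _ _) hb2α)
      (mul_le_mul_of_nonneg_right (le_max_right _ _) hb2α)
  -- bounds on v - u
  have hE1 : v - u = 2 * Real.sin ((a+b)/2) * Real.sin ((b-a)/2) := by
    have h := Real.cos_sub_cos a b
    have hneg : Real.sin ((a-b)/2) = - Real.sin ((b-a)/2) := by
      rw [show (a-b)/2 = -((b-a)/2) by ring, Real.sin_neg]
    rw [hneg] at h
    simp only [hudef, hvdef]; linarith
  have hs1l : (a+b)/2/5 ≤ Real.sin ((a+b)/2) := sin_lb (by linarith) (by linarith)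
  have hs1u : Real.sin ((a+b)/2) ≤ (a+b)/2 := Real.sin_le (by linarith)
  have hs2l : (b-a)/2/5 ≤ Real.sin ((b-a)/2) := sin_lb (by linarith) (by linarith)
  have hs2u : Real.sin ((b-a)/2) ≤ (b-a)/2 := Real.sin_le (by linarith)
  have hvul : b * (b-a) / 50 ≤ v - u := by
    rw [hE1]
    have h2 : (a+b)/2/5 * ((b-a)/2/5) ≤ Real.sin ((a+b)/2) * Real.sin ((b-a)/2) :=
      mul_le_mul hs1l hs2l (by linarith) (by linarith)
    nlinarith [mul_nonneg ha (show (0:ℝ) ≤ b - a by linarith)]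
  have hvuu : v - u ≤ b * (b-a) := by
    rw [hE1]
    have h2 : Real.sin ((a+b)/2) * Real.sin ((b-a)/2) ≤ (a+b)/2 * ((b-a)/2) :=
      mul_le_mul hs1u hs2u (by linarith) (by linarith)
    nlinarith [mul_nonneg ha (show (0:ℝ) ≤ b - a by linarith)]
  have hbb : b * b ^ (2*α) = b ^ (2*α+1) := by
    rw [Real.rpow_add hb, Real.rpow_one]; ring
  have hD := pow_diff_bnd hp hu huv
  rw [show p - 1 = α by simp [hpdef]] at hD
  constructor
  · refine le_trans ?_ hD.1
    have hstep : (b * (b-a) / 50) * (m2 * b ^ (2*α)) ≤ (v - u) * v ^ α := by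
      have h0 : 0 ≤ b * (b-a) / 50 :=
        div_nonneg (mul_nonneg hb.le (by linarith)) (by norm_num)
      exact mul_le_mul hvul hval (mul_nonneg hm2.le hb2α) (h0.trans hvul)
    calc min 1 p * (m2 / 50) * ((b - a) * b ^ (2*α+1))
        = min 1 p * ((b * (b-a) / 50) * (m2 * b ^ (2*α))) := by rw [← hbb]; ring
      _ ≤ min 1 p * ((v - u) * v ^ α) := mul_le_mul_of_nonneg_left hstep hmin1p.le
  · refine le_trans hD.2 ?_
    have hvα : 0 ≤ v ^ α := Real.rpow_nonneg (hu.trans huv) _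
    have hstep : (v - u) * v ^ α ≤ (b * (b-a)) * (M2 * b ^ (2*α)) := by
      exact mul_le_mul hvuu hvau hvα (mul_nonneg hb.le (by linarith))
    calc max 1 p * ((v - u) * v ^ α)
        ≤ max 1 p * ((b * (b-a)) * (M2 * b ^ (2*α))) := mul_le_mul_of_nonneg_left hstep hmax1p.le
      _ = max 1 p * M2 * ((b - a) * b ^ (2*α+1)) := by rw [← hbb]; ring


lemma intg_on (α : ℝ) (hα : α > -1) :
    IntegrableOn (fun x : ℝ => (1-x)^α) (Set.Icc (-1:ℝ) 1) volume := by
  have h0 : IntervalIntegrable (fun x : ℝ => x ^ α) volume 0 2 :=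
    intervalIntegral.intervalIntegrable_rpow' hα
  have h1 : IntervalIntegrable (fun x : ℝ => (1-x) ^ α) volume (-1) 1 := by
    have := (h0.comp_sub_left 1).symm
    norm_num at this
    exact this
  exact (intervalIntegrable_iff_integrableOn_Icc_of_le (by norm_num)).1 h1

lemma intw_on (α β : ℝ) (hα : α > -1) (hβ : β > -1) :
    IntegrableOn (fun x : ℝ => (1-x)^α * (1+x)^β) (Set.Icc (-1:ℝ) 1) volume := by
  have hL : IntegrableOn (fun x : ℝ => (1-x)^α * (1+x)^β) (Set.Icc (-1:ℝ) 0) volume := by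
    have h0 : IntervalIntegrable (fun x : ℝ => x ^ β) volume 0 1 :=
      intervalIntegral.intervalIntegrable_rpow' hβ
    have h1 : IntervalIntegrable (fun x : ℝ => (x+1) ^ β) volume (-1) 0 := by
      have := h0.comp_add_right 1
      norm_num at this
      exact this
    have hc : ContinuousOn (fun x : ℝ => (1-x) ^ α) (Set.uIcc (-1:ℝ) 0) := by
      apply ContinuousOn.rpow_const (by fun_prop)
      intro x hx
      rw [Set.uIcc_of_le (by norm_num)] at hx
      left
      have := hx.2
      intro h; nlinarith [hx.2]
    have h2 : IntervalIntegrable (fun x : ℝ => (1-x)^α * (x+1)^β) volume (-1) 0 :=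
      h1.continuousOn_mul hc
    have h3 := (intervalIntegrable_iff_integrableOn_Icc_of_le (by norm_num : (-1:ℝ) ≤ 0)).1 h2
    apply h3.congr_fun ?_ measurableSet_Icc
    intro x _; simp [add_comm]
  have hR : IntegrableOn (fun x : ℝ => (1-x)^α * (1+x)^β) (Set.Icc (0:ℝ) 1) volume := by
    have h0 : IntervalIntegrable (fun x : ℝ => x ^ α) volume 0 1 :=
      intervalIntegral.intervalIntegrable_rpow' hα
    have h1 : IntervalIntegrable (fun x : ℝ => (1-x) ^ α) volume 0 1 := by
      have := (h0.comp_sub_left 1).symm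
      norm_num at this
      exact this
    have hc : ContinuousOn (fun x : ℝ => (1+x) ^ β) (Set.uIcc (0:ℝ) 1) := by
      apply ContinuousOn.rpow_const (by fun_prop)
      intro x hx
      rw [Set.uIcc_of_le (by norm_num)] at hx
      left
      intro h; nlinarith [hx.1]
    have h2 : IntervalIntegrable (fun x : ℝ => (1-x)^α * (1+x)^β) volume 0 1 :=
      h1.mul_continuousOn hc
    exact (intervalIntegrable_iff_integrableOn_Icc_of_le (by norm_num : (0:ℝ) ≤ 1)).1 h2
  exact (hL.union hR).mono_set (by
    intro x hx
    rcases le_total x 0 with h | h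
    · exact Set.mem_union_left _ ⟨hx.1, h⟩
    · exact Set.mem_union_right _ ⟨h, hx.2⟩)

lemma int_eq (α : ℝ) (hα : α > -1) {u v : ℝ} (huv : u ≤ v) :
    ∫ x in Set.Icc u v, (1-x)^α =
      ((1-u)^(α+1) - (1-v)^(α+1)) / (α+1) := by
  rw [MeasureTheory.integral_Icc_eq_integral_Ioc,
    ← intervalIntegral.integral_of_le huv]
  have h1 := intervalIntegral.integral_comp_sub_left (a := u) (b := v)
    (fun s : ℝ => s ^ α) 1
  rw [h1, integral_rpow (Or.inl hα)]


lemma cos_ge_34 {b : ℝ} (hb0 : 0 ≤ b) (hb : b ≤ 3*π/4) : (-3/4 : ℝ) ≤ Real.cos b := by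
  have hπ := Real.pi_pos
  have h1 : Real.cos (3*π/4) ≤ Real.cos b :=
    Real.cos_le_cos_of_nonneg_of_le_pi hb0 (by linarith) hb
  have h2 : Real.cos (3*π/4) = -(Real.sqrt 2/2) := by
    rw [show 3*π/4 = π - π/4 by ring, Real.cos_pi_sub, Real.cos_pi_div_four]
  have h3 : Real.sqrt 2 ≤ 3/2 := by
    nlinarith [Real.sq_sqrt (by norm_num : (0:ℝ) ≤ 2), Real.sqrt_nonneg 2]
  linarith

theorem stmt1 (α β : ℝ) (hα : α > -1) (hβ : β > -1) :
    ∃ c₁ > (0:ℝ), ∃ c₂ > (0:ℝ), ∀ y ∈ Set.Icc (0:ℝ) 1, ∀ r : ℝ, 0 < r → r ≤ π →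
      c₁ * r * (Real.arccos y + r) ^ (2*α+1) ≤
        (∫ x in {x : ℝ | x ∈ Set.Icc (-1:ℝ) 1 ∧ |Real.arccos x - Real.arccos y| ≤ r},
          (1 - x) ^ α * (1 + x) ^ β) ∧
      (∫ x in {x : ℝ | x ∈ Set.Icc (-1:ℝ) 1 ∧ |Real.arccos x - Real.arccos y| ≤ r},
          (1 - x) ^ α * (1 + x) ^ β) ≤
        c₂ * r * (Real.arccos y + r) ^ (2*α+1) := by
  have hπ := Real.pi_pos
  have hp1 : (0:ℝ) < α + 1 := by linarith
  obtain ⟨cc, hcc, CC, hCC, hcore⟩ := core_bnd α hα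
  set cβ : ℝ := min ((1/4:ℝ) ^ β) ((2:ℝ) ^ β) with hcβdef
  set Cβ : ℝ := max ((1/4:ℝ) ^ β) ((2:ℝ) ^ β) with hCβdef
  have hcβ : 0 < cβ := lt_min (Real.rpow_pos_of_pos (by norm_num) _)
    (Real.rpow_pos_of_pos (by norm_num) _)
  have hCβ : 0 < Cβ := lt_of_lt_of_le hcβ min_le_max
  set κ : ℝ := min ((1/2:ℝ) ^ (2*α+1)) 1 with hκdef
  have hκ : 0 < κ := lt_min (Real.rpow_pos_of_pos (by norm_num) _) one_pos
  set M : ℝ := ∫ x in Set.Icc (-1:ℝ) 1, (1-x)^α * (1+x)^β with hMdef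
  have hwnn : ∀ x ∈ Set.Icc (-1:ℝ) 1, 0 ≤ (1-x)^α * (1+x)^β := fun x hx =>
    mul_nonneg (Real.rpow_nonneg (by linarith [hx.2]) _)
      (Real.rpow_nonneg (by linarith [hx.1]) _)
  have hM0 : 0 ≤ M := setIntegral_nonneg measurableSet_Icc hwnn
  set c'' : ℝ := (π/4) * min ((3*π/4) ^ (2*α+1)) ((3*π/2) ^ (2*α+1)) with hc''def
  have hc'' : 0 < c'' := mul_pos (by positivity)
    (lt_min (Real.rpow_pos_of_pos (by linarith) _) (Real.rpow_pos_of_pos (by linarith) _))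
  refine ⟨cβ / (α+1) * cc * κ / 2,
    div_pos (mul_pos (mul_pos (div_pos hcβ hp1) hcc) hκ) two_pos, 
    max (Cβ * CC * 2 / (α+1)) ((M+1)/c''),
    lt_of_lt_of_le (div_pos (by linarith) hc'') (le_max_right _ _), ?_⟩
  intro y hy r hr hrπ
  set t : ℝ := Real.arccos y with htdef
  have ht0 : 0 ≤ t := Real.arccos_nonneg y
  have htπ : t ≤ π := Real.arccos_le_pi y
  have ht2 : t ≤ π/2 := by
    by_contra h
    push_neg at h
    have hct : Real.cos t < 0 := Real.cos_neg_of_pi_div_two_lt_of_lt h (by linarith)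
    rw [htdef, Real.cos_arccos (by linarith [hy.1]) hy.2] at hct
    linarith [hy.1]
  set a' : ℝ := max 0 (t - r) with ha'def
  set b' : ℝ := min π (t + r) with hb'def
  set b₀ : ℝ := min (t + r) (3*π/4) with hb₀def
  have ha'0 : 0 ≤ a' := le_max_left _ _
  have ha'π : a' ≤ π := max_le hπ.le (by linarith)
  have ha't : a' ≤ t := max_le ht0 (by linarith)
  have hb'0 : 0 ≤ b' := le_min hπ.le (by linarith)
  have hb'π : b' ≤ π := min_le_left _ _
  have hb₀pos : 0 < b₀ := lt_min (by linarith) (by linarith)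
  have hb₀34 : b₀ ≤ 3*π/4 := min_le_right _ _
  have hb₀π : b₀ ≤ π := by linarith
  have hb₀b' : b₀ ≤ b' := le_min hb₀π (min_le_left _ _)
  have ha'b₀ : a' ≤ b₀ := max_le hb₀pos.le (le_min (by linarith) (by linarith))
  have ha'b' : a' ≤ b' := ha'b₀.trans hb₀b'
  have hhalf : (t+r)/2 ≤ b₀ := le_min (by linarith) (by linarith)
  have hb₀tr : b₀ ≤ t + r := min_le_left _ _
  have htr0 : 0 < t + r := by linarith
  have hdiff : r/2 ≤ b₀ - a' := by
    rcases le_total (t+r) (3*π/4) with hcase | hcase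
    · rw [hb₀def, min_eq_left hcase]
      linarith
    · rw [hb₀def, min_eq_right hcase]
      have hr4 : π/4 ≤ r := by linarith
      have ha4 : a' ≤ π/4 := max_le (by linarith) (by linarith)
      linarith
  -- the ball is an interval
  have Seq : {x : ℝ | x ∈ Set.Icc (-1:ℝ) 1 ∧ |Real.arccos x - t| ≤ r}
      = Set.Icc (Real.cos b') (Real.cos a') := by
    ext x
    simp only [Set.mem_setOf_eq, Set.mem_Icc, abs_le]
    constructor
    · rintro ⟨⟨hx1, hx2⟩, h1, h2⟩
      have hax0 := Real.arccos_nonneg x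
      have haxπ := Real.arccos_le_pi x
      constructor
      · have hxb : Real.arccos x ≤ b' := le_min haxπ (by linarith)
        have h := Real.cos_le_cos_of_nonneg_of_le_pi hax0 hb'π hxb
        rwa [Real.cos_arccos hx1 hx2] at h
      · have hxa : a' ≤ Real.arccos x := max_le hax0 (by linarith)
        have h := Real.cos_le_cos_of_nonneg_of_le_pi ha'0 haxπ hxa
        rwa [Real.cos_arccos hx1 hx2] at h
    · rintro ⟨hl, hr'⟩
      have hx1 : -1 ≤ x := le_trans (Real.neg_one_le_cos b') hl
      have hx2 : x ≤ 1 := le_trans hr' (Real.cos_le_one a')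
      have hmono := Real.strictAntiOn_arccos.antitoneOn
      have hmemb : Real.cos b' ∈ Set.Icc (-1:ℝ) 1 := ⟨Real.neg_one_le_cos b', Real.cos_le_one b'⟩
      have hmema : Real.cos a' ∈ Set.Icc (-1:ℝ) 1 := ⟨Real.neg_one_le_cos a', Real.cos_le_one a'⟩
      have hmemx : x ∈ Set.Icc (-1:ℝ) 1 := ⟨hx1, hx2⟩
      have hA : Real.arccos x ≤ Real.arccos (Real.cos b') := hmono hmemb hmemx hl
      have hB : Real.arccos (Real.cos a') ≤ Real.arccos x := hmono hmemx hmema hr'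
      rw [Real.arccos_cos hb'0 hb'π] at hA
      rw [Real.arccos_cos ha'0 ha'π] at hB
      have hb'tr : b' ≤ t + r := min_le_right _ _
      have ha'tr : t - r ≤ a' := le_max_right _ _
      exact ⟨⟨hx1, hx2⟩, by linarith, by linarith⟩
  rw [Seq]
  -- basic integrability facts
  have hsub' : Set.Icc (Real.cos b') (Real.cos a') ⊆ Set.Icc (-1:ℝ) 1 :=
    Set.Icc_subset_Icc (Real.neg_one_le_cos _) (Real.cos_le_one _)
  have hIw : IntegrableOn (fun x : ℝ => (1-x)^α * (1+x)^β)
      (Set.Icc (Real.cos b') (Real.cos a')) volume := (intw_on α β hα hβ).mono_set hsub'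
  have hcbb : Real.cos b' ≤ Real.cos b₀ :=
    Real.cos_le_cos_of_nonneg_of_le_pi hb₀pos.le hb'π hb₀b'
  have hsub₀ : Set.Icc (Real.cos b₀) (Real.cos a') ⊆ Set.Icc (Real.cos b') (Real.cos a') :=
    Set.Icc_subset_Icc hcbb le_rfl
  have hcab : Real.cos b₀ ≤ Real.cos a' :=
    Real.cos_le_cos_of_nonneg_of_le_pi ha'0 hb₀π ha'b₀
  have hcab' : Real.cos b' ≤ Real.cos a' :=
    Real.cos_le_cos_of_nonneg_of_le_pi ha'0 hb'π ha'b'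
  have hq0 : 0 ≤ (t+r) ^ (2*α+1) := Real.rpow_nonneg htr0.le _
  constructor
  · -- LOWER BOUND
    have step1 : ∫ x in Set.Icc (Real.cos b₀) (Real.cos a'), cβ * (1-x)^α ≤
        ∫ x in Set.Icc (Real.cos b₀) (Real.cos a'), (1-x)^α * (1+x)^β := by
      refine setIntegral_mono_on
        (((intg_on α hα).mono_set (hsub₀.trans hsub')).const_mul cβ)
        (hIw.mono_set hsub₀) measurableSet_Icc ?_
      intro x hx
      have hx14 : (1/4 : ℝ) ≤ 1 + x := by
        have := cos_ge_34 hb₀pos.le hb₀34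
        have := hx.1; linarith
      have hx2 : 1 + x ≤ 2 := by
        have := hx.2; have := Real.cos_le_one a'; linarith
      have hbb := rpow_bnd β (by norm_num : (0:ℝ) < 1/4) hx14 hx2
      have hg : 0 ≤ (1-x)^α := Real.rpow_nonneg
        (by have := hx.2; have := Real.cos_le_one a'; linarith) _
      calc cβ * (1-x)^α = (1-x)^α * cβ := by ring
        _ ≤ (1-x)^α * (1+x)^β := mul_le_mul_of_nonneg_left hbb.1 hg
  
    have step2 : ∫ x in Set.Icc (Real.cos b₀) (Real.cos a'), cβ * (1-x)^α =
        cβ * (((1 - Real.cos b₀)^(α+1) - (1 - Real.cos a')^(α+1)) / (α+1)) := by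
      rw [MeasureTheory.integral_const_mul, int_eq α hα hcab]
    have step4 := (hcore a' b₀ ha'0 ha'b₀ hb₀pos hb₀34).1
    have hb₀q : κ * (t+r) ^ (2*α+1) ≤ b₀ ^ (2*α+1) := by
      have h := (rpow_bnd (2*α+1) (by linarith : (0:ℝ) < (t+r)/2) hhalf hb₀tr).1
      refine le_trans ?_ h
      have heq : ((t+r)/2) ^ (2*α+1) = (1/2:ℝ)^(2*α+1) * (t+r)^(2*α+1) := by
        rw [show (t+r)/2 = (1/2:ℝ)*(t+r) by ring, Real.mul_rpow (by norm_num) htr0.le]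
      rw [heq]
      refine le_min (mul_le_mul_of_nonneg_right (min_le_left _ _) hq0) ?_
      calc κ * (t+r)^(2*α+1) ≤ 1 * (t+r)^(2*α+1) :=
            mul_le_mul_of_nonneg_right (min_le_right _ _) hq0
        _ = (t+r)^(2*α+1) := one_mul _
    have step5 : (r/2) * (κ * (t+r)^(2*α+1)) ≤ (b₀ - a') * b₀ ^ (2*α+1) :=
      mul_le_mul hdiff hb₀q (mul_nonneg hκ.le hq0) (by linarith)
    have chain : cβ / (α+1) * cc * κ / 2 * r * (t+r)^(2*α+1) ≤
        ∫ x in Set.Icc (Real.cos b₀) (Real.cos a'), cβ * (1-x)^α := by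
      rw [step2]
      have h1 : cc * ((r/2) * (κ * (t+r)^(2*α+1))) ≤ cc * ((b₀ - a') * b₀ ^ (2*α+1)) :=
        mul_le_mul_of_nonneg_left step5 hcc.le
      have h2 : cc * ((b₀ - a') * b₀ ^ (2*α+1)) ≤
          (1 - Real.cos b₀)^(α+1) - (1 - Real.cos a')^(α+1) := step4
      have h3 : cβ / (α+1) * (cc * ((r/2) * (κ * (t+r)^(2*α+1)))) ≤
          cβ / (α+1) * ((1 - Real.cos b₀)^(α+1) - (1 - Real.cos a')^(α+1)) :=
        mul_le_mul_of_nonneg_left (h1.trans h2) (by positivity)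
      calc cβ / (α+1) * cc * κ / 2 * r * (t+r)^(2*α+1)
          = cβ / (α+1) * (cc * ((r/2) * (κ * (t+r)^(2*α+1)))) := by ring
        _ ≤ cβ / (α+1) * ((1 - Real.cos b₀)^(α+1) - (1 - Real.cos a')^(α+1)) := h3
        _ = cβ * (((1 - Real.cos b₀)^(α+1) - (1 - Real.cos a')^(α+1)) / (α+1)) := by ring
    have step6 : ∫ x in Set.Icc (Real.cos b₀) (Real.cos a'), (1-x)^α * (1+x)^β ≤
        ∫ x in Set.Icc (Real.cos b') (Real.cos a'), (1-x)^α * (1+x)^β := by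
      refine setIntegral_mono_set hIw ?_ hsub₀.eventuallyLE
      exact (ae_restrict_iff' measurableSet_Icc).2 (ae_of_all _ (fun x hx => hwnn x (hsub' hx)))
    linarith [chain, step1, step6]
  · -- UPPER BOUND
    rcases le_total (t+r) (3*π/4) with hcase | hcase
    · -- case A
      have hb'eq : b' = t + r := min_eq_right (by linarith)
      have hb'34 : b' ≤ 3*π/4 := by rw [hb'eq]; exact hcase
      have hb'pos : 0 < b' := by rw [hb'eq]; exact htr0
      have stepU1 : ∫ x in Set.Icc (Real.cos b') (Real.cos a'), (1-x)^α * (1+x)^β ≤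
          ∫ x in Set.Icc (Real.cos b') (Real.cos a'), Cβ * (1-x)^α := by
        refine setIntegral_mono_on hIw
          (((intg_on α hα).mono_set hsub').const_mul Cβ) measurableSet_Icc ?_
        intro x hx
        have hx14 : (1/4 : ℝ) ≤ 1 + x := by
          have := cos_ge_34 hb'pos.le hb'34
          have := hx.1; linarith
        have hx2 : 1 + x ≤ 2 := by
          have := hx.2; have := Real.cos_le_one a'; linarith
        have hbb := rpow_bnd β (by norm_num : (0:ℝ) < 1/4) hx14 hx2
        have hg : 0 ≤ (1-x)^α := Real.rpow_nonneg
          (by have := hx.2; have := Real.cos_le_one a'; linarith) _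
        calc (1-x)^α * (1+x)^β ≤ (1-x)^α * Cβ := mul_le_mul_of_nonneg_left hbb.2 hg
          _ = Cβ * (1-x)^α := by ring
      have stepU2 : ∫ x in Set.Icc (Real.cos b') (Real.cos a'), Cβ * (1-x)^α =
          Cβ * (((1 - Real.cos b')^(α+1) - (1 - Real.cos a')^(α+1)) / (α+1)) := by
        rw [MeasureTheory.integral_const_mul, int_eq α hα hcab']
      have stepU4 := (hcore a' b' ha'0 ha'b' hb'pos hb'34).2
      have stepU5 : (b' - a') * b' ^ (2*α+1) ≤ (2*r) * (t+r) ^ (2*α+1) := by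
        rw [hb'eq]
        have ha'tr : t - r ≤ a' := le_max_right _ _
        exact mul_le_mul_of_nonneg_right (by linarith) hq0
      have chain : ∫ x in Set.Icc (Real.cos b') (Real.cos a'), Cβ * (1-x)^α ≤
          (Cβ * CC * 2 / (α+1)) * r * (t+r)^(2*α+1) := by
        rw [stepU2]
        have h1 : (1 - Real.cos b')^(α+1) - (1 - Real.cos a')^(α+1) ≤
            CC * ((2*r) * (t+r)^(2*α+1)) :=
          stepU4.trans (mul_le_mul_of_nonneg_left stepU5 hCC.le)
        have h2 : Cβ / (α+1) * ((1 - Real.cos b')^(α+1) - (1 - Real.cos a')^(α+1)) ≤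
            Cβ / (α+1) * (CC * ((2*r) * (t+r)^(2*α+1))) :=
          mul_le_mul_of_nonneg_left h1 (by positivity)
        calc Cβ * (((1 - Real.cos b')^(α+1) - (1 - Real.cos a')^(α+1)) / (α+1))
            = Cβ / (α+1) * ((1 - Real.cos b')^(α+1) - (1 - Real.cos a')^(α+1)) := by ring
          _ ≤ Cβ / (α+1) * (CC * ((2*r) * (t+r)^(2*α+1))) := h2
          _ = (Cβ * CC * 2 / (α+1)) * r * (t+r)^(2*α+1) := by ring
      have hfin : (Cβ * CC * 2 / (α+1)) * r * (t+r)^(2*α+1) ≤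
          max (Cβ * CC * 2 / (α+1)) ((M+1)/c'') * r * (t+r)^(2*α+1) := by
        have := mul_le_mul_of_nonneg_right
          (mul_le_mul_of_nonneg_right (le_max_left (Cβ * CC * 2 / (α+1)) ((M+1)/c'')) hr.le) hq0
        exact this
      linarith [stepU1, chain, hfin]
    · -- case B
      have hIleM : ∫ x in Set.Icc (Real.cos b') (Real.cos a'), (1-x)^α * (1+x)^β ≤ M := by
        rw [hMdef]
        refine setIntegral_mono_set (intw_on α β hα hβ) ?_ hsub'.eventuallyLE
        exact (ae_restrict_iff' measurableSet_Icc).2 (ae_of_all _ hwnn)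
      have hr4 : π/4 ≤ r := by linarith
      have hc''le : c'' ≤ r * (t+r)^(2*α+1) := by
        have h := (rpow_bnd (2*α+1) (by linarith : (0:ℝ) < 3*π/4) hcase
          (by linarith : t + r ≤ 3*π/2)).1
        have hmn : 0 ≤ min ((3*π/4) ^ (2*α+1)) ((3*π/2) ^ (2*α+1)) :=
          le_min (Real.rpow_nonneg (by linarith) _) (Real.rpow_nonneg (by linarith) _)
        rw [hc''def]
        exact mul_le_mul hr4 h hmn hr.le
      have h1 : M ≤ ((M+1)/c'') * c'' := by
        rw [div_mul_cancel₀ _ hc''.ne']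
        linarith
      have h2 : ((M+1)/c'') * c'' ≤ ((M+1)/c'') * (r * (t+r)^(2*α+1)) :=
        mul_le_mul_of_nonneg_left hc''le (div_nonneg (by linarith) hc''.le)
      have h3 : ((M+1)/c'') * (r * (t+r)^(2*α+1)) ≤
          max (Cβ * CC * 2 / (α+1)) ((M+1)/c'') * (r * (t+r)^(2*α+1)) :=
        mul_le_mul_of_nonneg_right (le_max_right _ _) (mul_nonneg hr.le hq0)
      calc ∫ x in Set.Icc (Real.cos b') (Real.cos a'), (1-x)^α * (1+x)^β ≤ M := hIleM
        _ ≤ ((M+1)/c'') * c'' := h1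
        _ ≤ ((M+1)/c'') * (r * (t+r)^(2*α+1)) := h2
        _ ≤ max (Cβ * CC * 2 / (α+1)) ((M+1)/c'') * (r * (t+r)^(2*α+1)) := h3
        _ = max (Cβ * CC * 2 / (α+1)) ((M+1)/c'') * r * (t+r)^(2*α+1) := by ring
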